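/- For every x ≥ 2 one has the representation κ(x) = (x−1) Λ({0})/2 + ∫_0^1 (1 − (1−y)^{x−1}) T(y) dy; consequently the function x ↦ κ(x) is increasing on [2,∞). -/

import Mathlib

open MeasureTheory Real Set Filter Topology ENNReal

/-- The integrand of `mu`, with its continuous extension `x(x-1)/2` at `p = 0`. -/
noncomputable def muInt (x p : ℝ) : ℝ :=
  if p = 0 then x * (x - 1) / 2
  else (x * p - 1 + (1 - p) ^ x) / p ^ 2

/-- The rate of decrease `μ(x)` of the `Λ`-coalescent. -/
noncomputable def mu (Λ : Measure ℝ) (x : ℝ) : ℝ :=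
  ∫ p in Set.Icc (0:ℝ) 1, muInt x p ∂Λ

/-- The rate of decrease per capita `κ(x) = μ(x)/x`. -/
noncomputable def kappa (Λ : Measure ℝ) (x : ℝ) : ℝ := mu Λ x / x

/-- `T(y) = ∫_{(y,1]} p⁻² Λ(dp)`. -/
noncomputable def T (Λ : Measure ℝ) (y : ℝ) : ℝ :=
  ∫ p in Set.Ioc y 1, 1 / p ^ 2 ∂Λ

/-! ### Auxiliary lemmas -/

lemma rpow_cont {c : ℝ} (hc : 0 ≤ c) : Continuous (fun y : ℝ => (1 - y) ^ c) := by
  rw [continuous_iff_continuousAt]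
  intro y
  exact (Real.continuousAt_rpow_const (1 - y) c (Or.inr hc)).comp
    ((continuous_const.sub continuous_id).continuousAt)

lemma fcont {x : ℝ} (hx : 1 ≤ x) : Continuous (fun y : ℝ => (1 - y) ^ (x - 1)) :=
  rpow_cont (by linarith)

lemma f_nonneg {x y : ℝ} (hx : 1 ≤ x) (hy0 : 0 ≤ y) (hy : y ≤ 1) :
    0 ≤ 1 - (1 - y) ^ (x - 1) := by
  have := Real.rpow_le_one (x := 1 - y) (z := x - 1) (by linarith) (by linarith) (by linarith)
  linarith

lemma f_le {x y : ℝ} (hx : 2 ≤ x) (hy : y ≤ 1) :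
    1 - (1 - y) ^ (x - 1) ≤ (x - 1) * y := by
  have := one_add_mul_self_le_rpow_one_add (s := -y) (by linarith) (p := x - 1) (by linarith)
  have h2 : (1 : ℝ) + -y = 1 - y := by ring
  rw [h2] at this
  nlinarith

lemma f_mono {a b y : ℝ} (ha : 2 ≤ a) (hab : a ≤ b) (hy0 : 0 < y) (hy : y < 1) :
    1 - (1 - y) ^ (a - 1) ≤ 1 - (1 - y) ^ (b - 1) := by
  have := Real.rpow_le_rpow_of_exponent_ge (x := 1 - y) (by linarith) (by linarith)
    (by linarith : a - 1 ≤ b - 1)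
  linarith

lemma f_integral {x : ℝ} (hx : 2 ≤ x) (p : ℝ) :
    ∫ y in (0:ℝ)..p, (1 - (1 - y) ^ (x - 1)) = p - (1 - (1 - p) ^ x) / x := by
  have h1 : ∫ y in (0:ℝ)..p, (1 - y) ^ (x - 1) = (1 - (1 - p) ^ x) / x := by
    have := intervalIntegral.integral_comp_sub_left (a := (0:ℝ)) (b := p)
      (fun u : ℝ => u ^ (x - 1)) 1
    rw [this, integral_rpow (Or.inl (by linarith))]
    norm_num [Real.one_rpow]
  have hi : IntervalIntegrable (fun y : ℝ => (1 - y) ^ (x - 1)) volume 0 p :=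
    (fcont (by linarith)).intervalIntegrable 0 p
  rw [intervalIntegral.integral_sub intervalIntegrable_const hi, h1]
  simp

lemma muInt_div {x p : ℝ} (hx : 2 ≤ x) (hp : p ≠ 0) :
    muInt x p / x = (∫ y in (0:ℝ)..p, (1 - (1 - y) ^ (x - 1))) / p ^ 2 := by
  have hx0 : x ≠ 0 := by positivity
  rw [muInt, if_neg hp, f_integral hx]
  field_simp
  ring

lemma fint {x : ℝ} (hx : 2 ≤ x) (a b : ℝ) :
    IntervalIntegrable (fun y : ℝ => 1 - (1 - y) ^ (x - 1)) volume a b :=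
  (continuous_const.sub (fcont (by linarith))).intervalIntegrable a b

lemma f_int_nonneg {x p : ℝ} (hx : 2 ≤ x) (hp0 : 0 ≤ p) (hp1 : p ≤ 1) :
    0 ≤ ∫ y in (0:ℝ)..p, (1 - (1 - y) ^ (x - 1)) := by
  apply intervalIntegral.integral_nonneg hp0
  intro y hy
  exact f_nonneg (by linarith) hy.1 (by linarith [hy.2])

lemma f_int_le {x p : ℝ} (hx : 2 ≤ x) (hp0 : 0 ≤ p) (hp1 : p ≤ 1) :
    (∫ y in (0:ℝ)..p, (1 - (1 - y) ^ (x - 1))) ≤ (x - 1) * p ^ 2 / 2 := by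
  have h1 : (∫ y in (0:ℝ)..p, (1 - (1 - y) ^ (x - 1))) ≤ ∫ y in (0:ℝ)..p, (x - 1) * y := by
    apply intervalIntegral.integral_mono_on hp0 (fint hx 0 p)
      ((continuous_const.mul continuous_id).intervalIntegrable 0 p)
    intro y hy
    exact f_le hx (by linarith [hy.2])
  have h2 : ∫ y in (0:ℝ)..p, (x - 1) * y = (x - 1) * p ^ 2 / 2 := by
    rw [intervalIntegral.integral_const_mul]
    simp [integral_id]
    ring
  linarith

lemma muInt_div_nonneg {x p : ℝ} (hx : 2 ≤ x) (hp0 : 0 ≤ p) (hp1 : p ≤ 1) :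
    0 ≤ muInt x p / x := by
  rcases eq_or_ne p 0 with rfl | hp
  · rw [muInt, if_pos rfl]
    have h1 : (0:ℝ) < x := by linarith
    have h2 : (0:ℝ) ≤ x - 1 := by linarith
    positivity
  · rw [muInt_div hx hp]
    have := f_int_nonneg hx hp0 hp1
    positivity

lemma muInt_div_le {x p : ℝ} (hx : 2 ≤ x) (hp0 : 0 ≤ p) (hp1 : p ≤ 1) :
    muInt x p / x ≤ (x - 1) / 2 := by
  rcases eq_or_ne p 0 with rfl | hp
  · rw [muInt, if_pos rfl]
    have hx0 : x ≠ 0 := by positivity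
    rw [div_div]
    rw [show x * (x - 1) / (2 * x) = (x - 1) / 2 * (x / x) by ring, div_self hx0, mul_one]
  · rw [muInt_div hx hp]
    have hp2 : (0:ℝ) < p ^ 2 := by positivity
    rw [div_le_iff₀ hp2]
    have := f_int_le hx hp0 hp1
    linarith [this, mul_le_mul_of_nonneg_left (sq_nonneg p) (by linarith : (0:ℝ) ≤ (x - 1) / 2)]

lemma muInt_meas {x : ℝ} (hx : 2 ≤ x) : Measurable (muInt x) := by
  unfold muInt
  apply Measurable.ite (measurableSet_eq) measurable_const
  apply Measurable.div
  · apply Measurable.add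
    · fun_prop
    · exact (rpow_cont (by linarith : (0:ℝ) ≤ x)).measurable
  · fun_prop

lemma inv_sq_meas : Measurable (fun p : ℝ => 1 / p ^ 2) := by fun_prop

lemma T_eq (Λ : Measure ℝ) (y : ℝ) :
    T Λ y = (∫⁻ p in Set.Ioc y 1, ENNReal.ofReal (1 / p ^ 2) ∂Λ).toReal := by
  rw [T, integral_eq_lintegral_of_nonneg_ae (ae_of_all _ fun p => by positivity)
    inv_sq_meas.aestronglyMeasurable]

lemma T_nonneg (Λ : Measure ℝ) (y : ℝ) : 0 ≤ T Λ y := by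
  rw [T_eq]; exact ENNReal.toReal_nonneg

lemma L_antitone (Λ : Measure ℝ) :
    Antitone (fun y => ∫⁻ p in Set.Ioc y 1, ENNReal.ofReal (1 / p ^ 2) ∂Λ) := by
  intro y y' h
  exact lintegral_mono_set (Set.Ioc_subset_Ioc_left h)

lemma T_meas (Λ : Measure ℝ) : Measurable (T Λ) := by
  have : T Λ = fun y => (∫⁻ p in Set.Ioc y 1, ENNReal.ofReal (1 / p ^ 2) ∂Λ).toReal :=
    funext fun y => T_eq Λ y
  rw [this]
  exact ENNReal.measurable_toReal.comp (L_antitone Λ).measurable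

lemma T_integrable (Λ : Measure ℝ) [IsFiniteMeasure Λ] {y : ℝ} (hy : 0 < y) :
    Integrable (fun p : ℝ => 1 / p ^ 2) (Λ.restrict (Set.Ioc y 1)) := by
  refine ⟨inv_sq_meas.aestronglyMeasurable, HasFiniteIntegral.of_bounded (C := 1 / y ^ 2) ?_⟩
  rw [ae_restrict_iff' measurableSet_Ioc]
  refine ae_of_all _ fun p hp => ?_
  have hp0 : 0 < p := lt_of_lt_of_le hy hp.1.le
  rw [Real.norm_eq_abs, abs_of_nonneg (by positivity)]
  apply one_div_le_one_div_of_le (by positivity)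
  exact pow_le_pow_left₀ hy.le hp.1.le 2

lemma ofReal_T (Λ : Measure ℝ) [IsFiniteMeasure Λ] {y : ℝ} (hy : 0 < y) :
    ENNReal.ofReal (T Λ y) = ∫⁻ p in Set.Ioc y 1, ENNReal.ofReal (1 / p ^ 2) ∂Λ :=
  ofReal_integral_eq_lintegral_ofReal (T_integrable Λ hy) (ae_of_all _ fun p => by positivity)

lemma muInt_div_integrable (Λ : Measure ℝ) [IsFiniteMeasure Λ] {x : ℝ} (hx : 2 ≤ x)
    {s : Set ℝ} (hs : MeasurableSet s) (hsub : s ⊆ Set.Icc (0:ℝ) 1) :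
    Integrable (fun p => muInt x p / x) (Λ.restrict s) := by
  refine ⟨((muInt_meas hx).div_const x).aestronglyMeasurable,
    HasFiniteIntegral.of_bounded (C := (x - 1) / 2) ?_⟩
  rw [ae_restrict_iff' hs]
  refine ae_of_all _ fun p hp => ?_
  obtain ⟨hp0, hp1⟩ := hsub hp
  rw [Real.norm_eq_abs, abs_of_nonneg (muInt_div_nonneg hx hp0 hp1)]
  exact muInt_div_le hx hp0 hp1

/-- The key Fubini step. -/
lemma key (Λ : Measure ℝ) [IsFiniteMeasure Λ] {x : ℝ} (hx : 2 ≤ x) :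
    ENNReal.ofReal (∫ p in Set.Ioc (0:ℝ) 1, muInt x p / x ∂Λ)
      = ∫⁻ y in Set.Ioo (0:ℝ) 1, ENNReal.ofReal ((1 - (1 - y) ^ (x - 1)) * T Λ y) := by
  set μ1 := Λ.restrict (Set.Ioc (0:ℝ) 1) with hμ1
  set μ2 := volume.restrict (Set.Ioo (0:ℝ) 1) with hμ2
  set F : ℝ → ℝ → ℝ≥0∞ := fun p y =>
    Set.indicator {q : ℝ × ℝ | q.2 < q.1}
      (fun q => ENNReal.ofReal ((1 - (1 - q.2) ^ (x - 1)) / q.1 ^ 2)) (p, y) with hF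
  have hFmeas : Measurable (Function.uncurry F) := by
    have : Function.uncurry F = Set.indicator {q : ℝ × ℝ | q.2 < q.1}
        (fun q => ENNReal.ofReal ((1 - (1 - q.2) ^ (x - 1)) / q.1 ^ 2)) := rfl
    rw [this]
    refine Measurable.indicator ?_ (measurableSet_lt measurable_snd measurable_fst)
    refine ENNReal.measurable_ofReal.comp (Measurable.div ?_ (by fun_prop))
    exact (continuous_const.sub (fcont (by linarith))).measurable.comp measurable_snd
  have swap := lintegral_lintegral_swap (μ := μ1) (ν := μ2) hFmeas.aemeasurable
  have hleft : ∀ p ∈ Set.Ioc (0:ℝ) 1, ∫⁻ y, F p y ∂μ2 = ENNReal.ofReal (muInt x p / x) := by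
    intro p hp
    have hFp : (fun y => F p y) = (Set.Iio p).indicator
        (fun y => ENNReal.ofReal ((1 - (1 - y) ^ (x - 1)) / p ^ 2)) := by
      funext y
      simp only [hF, Set.indicator_apply, Set.mem_setOf_eq, Set.mem_Iio]
    rw [hFp, hμ2, lintegral_indicator measurableSet_Iio,
      Measure.restrict_restrict measurableSet_Iio]
    have hset : Set.Iio p ∩ Set.Ioo 0 1 = Set.Ioo 0 p := by
      ext z
      simp only [Set.mem_inter_iff, Set.mem_Iio, Set.mem_Ioo]
      constructor
      · rintro ⟨h1, h2, h3⟩; exact ⟨h2, h1⟩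
      · rintro ⟨h1, h2⟩; exact ⟨h2, h1, lt_of_lt_of_le h2 hp.2⟩
    rw [hset]
    have hint : IntegrableOn (fun y => (1 - (1 - y) ^ (x - 1)) / p ^ 2) (Set.Ioo 0 p) volume := by
      refine IntegrableOn.mono_set ?_ Set.Ioo_subset_Icc_self
      exact ((continuous_const.sub (fcont (by linarith))).div_const _).integrableOn_Icc
    have hnn : 0 ≤ᵐ[volume.restrict (Set.Ioo 0 p)]
        fun y => (1 - (1 - y) ^ (x - 1)) / p ^ 2 := by
      filter_upwards [ae_restrict_mem measurableSet_Ioo] with y hy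
      exact div_nonneg (f_nonneg (by linarith) hy.1.le (le_trans hy.2.le hp.2)) (sq_nonneg p)
    rw [← ofReal_integral_eq_lintegral_ofReal hint hnn]
    congr 1
    rw [integral_div, ← integral_Ioc_eq_integral_Ioo,
      ← intervalIntegral.integral_of_le hp.1.le, muInt_div hx (ne_of_gt hp.1)]
  have hright : ∀ y ∈ Set.Ioo (0:ℝ) 1,
      ∫⁻ p, F p y ∂μ1 = ENNReal.ofReal ((1 - (1 - y) ^ (x - 1)) * T Λ y) := by
    intro y hy
    have hfy : 0 ≤ 1 - (1 - y) ^ (x - 1) := f_nonneg (by linarith) hy.1.le hy.2.le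
    have hFy : (fun p => F p y) = (Set.Ioi y).indicator
        (fun p => ENNReal.ofReal ((1 - (1 - y) ^ (x - 1)) / p ^ 2)) := by
      funext p
      simp only [hF, Set.indicator_apply, Set.mem_setOf_eq, Set.mem_Ioi]
    rw [hFy, hμ1, lintegral_indicator measurableSet_Ioi,
      Measure.restrict_restrict measurableSet_Ioi]
    have hset : Set.Ioi y ∩ Set.Ioc 0 1 = Set.Ioc y 1 := by
      ext z
      simp only [Set.mem_inter_iff, Set.mem_Ioi, Set.mem_Ioc]
      constructor
      · rintro ⟨h1, h2, h3⟩; exact ⟨h1, h3⟩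
      · rintro ⟨h1, h2⟩; exact ⟨h1, lt_trans hy.1 h1, h2⟩
    rw [hset]
    have hf : ∀ p : ℝ, ENNReal.ofReal ((1 - (1 - y) ^ (x - 1)) / p ^ 2)
        = ENNReal.ofReal (1 - (1 - y) ^ (x - 1)) * ENNReal.ofReal (1 / p ^ 2) := by
      intro p
      rw [← ENNReal.ofReal_mul hfy]
      congr 1
      ring
    simp_rw [hf]
    rw [lintegral_const_mul _ inv_sq_meas.ennreal_ofReal,
      ← ofReal_T Λ hy.1, ← ENNReal.ofReal_mul hfy]
  calc ENNReal.ofReal (∫ p in Set.Ioc (0:ℝ) 1, muInt x p / x ∂Λ)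
      = ∫⁻ p, ENNReal.ofReal (muInt x p / x) ∂μ1 := by
        refine ofReal_integral_eq_lintegral_ofReal
          (muInt_div_integrable Λ hx measurableSet_Ioc Set.Ioc_subset_Icc_self) ?_
        filter_upwards [ae_restrict_mem measurableSet_Ioc] with p hp
        exact muInt_div_nonneg hx hp.1.le hp.2
    _ = ∫⁻ p, ∫⁻ y, F p y ∂μ2 ∂μ1 := by
        refine (setLIntegral_congr_fun measurableSet_Ioc (fun p hp => ?_)).symm
        exact hleft p hp
    _ = ∫⁻ y, ∫⁻ p, F p y ∂μ1 ∂μ2 := swap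
    _ = ∫⁻ y in Set.Ioo (0:ℝ) 1, ENNReal.ofReal ((1 - (1 - y) ^ (x - 1)) * T Λ y) := by
        refine setLIntegral_congr_fun measurableSet_Ioo (fun y hy => ?_)
        exact hright y hy

lemma muInt_integrable (Λ : Measure ℝ) [IsFiniteMeasure Λ] {x : ℝ} (hx : 2 ≤ x)
    {s : Set ℝ} (hs : MeasurableSet s) (hsub : s ⊆ Set.Icc (0:ℝ) 1) :
    Integrable (muInt x) (Λ.restrict s) := by
  have hx0 : x ≠ 0 := by positivity
  have h := (muInt_div_integrable Λ hx hs hsub).const_mul x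
  have heq : (fun p => x * (muInt x p / x)) = muInt x := by
    funext p
    rw [mul_comm, div_mul_cancel₀ _ hx0]
  rwa [heq] at h

lemma mu_split (Λ : Measure ℝ) [IsFiniteMeasure Λ] {x : ℝ} (hx : 2 ≤ x) :
    mu Λ x = (Λ {0}).toReal * (x * (x - 1) / 2)
      + x * ∫ p in Set.Ioc (0:ℝ) 1, muInt x p / x ∂Λ := by
  have hx0 : x ≠ 0 := by positivity
  have hIcc : Set.Icc (0:ℝ) 1 = {0} ∪ Set.Ioc 0 1 := by
    rw [Set.singleton_union, Set.Ioc_insert_left zero_le_one]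
  have hd : Disjoint ({0} : Set ℝ) (Set.Ioc 0 1) := by
    rw [Set.disjoint_singleton_left]
    simp
  rw [mu, hIcc, setIntegral_union hd measurableSet_Ioc
    (muInt_integrable Λ hx (measurableSet_singleton 0)
      (by rw [Set.singleton_subset_iff]; exact ⟨le_refl 0, zero_le_one⟩))
    (muInt_integrable Λ hx measurableSet_Ioc Set.Ioc_subset_Icc_self)]
  congr 1
  · rw [integral_singleton, smul_eq_mul, muInt, if_pos rfl, measureReal_def]
  · rw [← integral_const_mul]
    congr 1
    funext p
    rw [mul_comm, div_mul_cancel₀ _ hx0]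

lemma kappa_master (Λ : Measure ℝ) [IsFiniteMeasure Λ] {x : ℝ} (hx : 2 ≤ x) :
    kappa Λ x = (x - 1) * (Λ {0}).toReal / 2
        + (∫⁻ y in Set.Ioo (0:ℝ) 1, ENNReal.ofReal ((1 - (1 - y) ^ (x - 1)) * T Λ y)).toReal
      ∧ (∫⁻ y in Set.Ioo (0:ℝ) 1, ENNReal.ofReal ((1 - (1 - y) ^ (x - 1)) * T Λ y)) ≠ ⊤
      ∧ (∫ y in (0:ℝ)..1, (1 - (1 - y) ^ (x - 1)) * T Λ y)
        = (∫⁻ y in Set.Ioo (0:ℝ) 1, ENNReal.ofReal ((1 - (1 - y) ^ (x - 1)) * T Λ y)).toReal := by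
  have hx0 : x ≠ 0 := by positivity
  set J := ∫ p in Set.Ioc (0:ℝ) 1, muInt x p / x ∂Λ with hJ
  have hJnn : 0 ≤ J :=
    setIntegral_nonneg measurableSet_Ioc fun p hp => muInt_div_nonneg hx hp.1.le hp.2
  have hkey := key Λ hx
  refine ⟨?_, ?_, ?_⟩
  · have hJtoReal : J = (∫⁻ y in Set.Ioo (0:ℝ) 1,
        ENNReal.ofReal ((1 - (1 - y) ^ (x - 1)) * T Λ y)).toReal := by
      rw [← hkey, ENNReal.toReal_ofReal hJnn]
    rw [kappa, mu_split Λ hx, ← hJ, hJtoReal]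
    field_simp
  · rw [← hkey]
    exact ENNReal.ofReal_ne_top
  · rw [intervalIntegral.integral_of_le zero_le_one, integral_Ioc_eq_integral_Ioo]
    rw [integral_eq_lintegral_of_nonneg_ae ?_ ?_]
    · filter_upwards [ae_restrict_mem measurableSet_Ioo] with y hy
      exact mul_nonneg (f_nonneg (by linarith) hy.1.le hy.2.le) (T_nonneg Λ y)
    · exact ((continuous_const.sub (fcont (by linarith))).measurable.mul
        (T_meas Λ)).aestronglyMeasurable

/-- Representation of `κ(x)` and its monotonicity: for every `x ≥ 2`,
`κ(x) = (x−1)Λ({0})/2 + ∫_0^1 (1 − (1−y)^{x−1}) T(y) dy`, and consequently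
`x ↦ κ(x)` is increasing on `[2, ∞)`. -/
theorem kappa_repr_and_monotone (Λ : Measure ℝ) [IsFiniteMeasure Λ] (hΛ : Λ ≠ 0)
    (hsupp : Λ (Set.Icc (0:ℝ) 1)ᶜ = 0) :
    (∀ x : ℝ, 2 ≤ x →
      kappa Λ x =
        (x - 1) * (Λ {0}).toReal / 2 + ∫ y in (0:ℝ)..1, (1 - (1 - y) ^ (x - 1)) * T Λ y) ∧
    MonotoneOn (kappa Λ) (Set.Ici 2) := by
  constructor
  · intro x hx
    obtain ⟨h1, _, h3⟩ := kappa_master Λ hx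
    rw [h1, h3]
  · intro a ha b hb hab
    rw [Set.mem_Ici] at ha hb
    obtain ⟨ha1, _, _⟩ := kappa_master Λ ha
    obtain ⟨hb1, hb2, _⟩ := kappa_master Λ hb
    rw [ha1, hb1]
    have hL : (∫⁻ y in Set.Ioo (0:ℝ) 1, ENNReal.ofReal ((1 - (1 - y) ^ (a - 1)) * T Λ y))
        ≤ ∫⁻ y in Set.Ioo (0:ℝ) 1, ENNReal.ofReal ((1 - (1 - y) ^ (b - 1)) * T Λ y) := by
      refine lintegral_mono_ae ?_
      filter_upwards [ae_restrict_mem measurableSet_Ioo] with y hy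
      exact ENNReal.ofReal_le_ofReal
        (mul_le_mul_of_nonneg_right (f_mono ha hab hy.1 hy.2) (T_nonneg Λ y))
    have h1 : (a - 1) * (Λ {0}).toReal / 2 ≤ (b - 1) * (Λ {0}).toReal / 2 := by
      have := ENNReal.toReal_nonneg (a := Λ {0})
      nlinarith
    have h2 := ENNReal.toReal_mono hb2 hL
    linarith
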